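/- arXiv:2102.01214 — 2 statements merged into one kernel-verified Lean document; each statement's English description precedes it below -/
import Mathlib

section
/- Let 1 > a₀ > a₁ > 0, 0 < b₁ < b₀ < c₀ < c₁, 1 > a₂ > 0, 0 < b₂ < c₂, and N > 0. Suppose K : Γ_{a₂,tb₂,tc₂} → ℂ satisfies sup_{w} N|K(w)|/|w| ≤ ε(t) where ε(t) → 0 as t → ∞ (uniformly over a family of functions). Then for all sufficiently large t: whenever z ∈ Γ_{a₀,tb₀,tc₀} and w ∈ Γ_{a₂,tb₂,tc₂}, the point z − N·K(w) lies in Γ_{a₁,tb₁,tc₁}. -/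
open Filter

/-- The truncated cone `Γ_{a,b,c} = {z : Im z ≥ max(a|z|, b), |z| ≤ c}`. -/
def truncCone (a b c : ℝ) : Set ℂ :=
  {z : ℂ | max (a * ‖z‖) b ≤ z.im ∧ ‖z‖ ≤ c}

/-- If a family of functions `K i` satisfies `N·|K i(w)| ≤ ε(t)·|w|` on
`Γ_{a₂,tb₂,tc₂}` with `ε(t) → 0`, then for all sufficiently large `t`:
`z ∈ Γ_{a₀,tb₀,tc₀}` and `w ∈ Γ_{a₂,tb₂,tc₂}` imply `z − N·K i(w) ∈ Γ_{a₁,tb₁,tc₁}`. -/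
theorem stmt6 {ι : Type*} (N a₀ a₁ a₂ b₀ b₁ b₂ c₀ c₁ c₂ : ℝ)
    (ha₀ : a₀ < 1) (ha₁ : a₁ < a₀) (ha₁' : 0 < a₁)
    (hb₁ : 0 < b₁) (hb₀ : b₁ < b₀) (hc₀ : b₀ < c₀) (hc₁ : c₀ < c₁)
    (ha₂ : a₂ < 1) (ha₂' : 0 < a₂) (hb₂ : 0 < b₂) (hc₂ : b₂ < c₂)
    (hN : 0 < N)
    (K : ι → ℂ → ℂ) (ε : ℝ → ℝ) (hε : Tendsto ε atTop (nhds 0))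
    (hK : ∀ t : ℝ, ∀ i : ι, ∀ w ∈ truncCone a₂ (t * b₂) (t * c₂),
      N * ‖K i w‖ ≤ ε t * ‖w‖) :
    ∃ T : ℝ, ∀ t ≥ T, ∀ i : ι,
      ∀ z ∈ truncCone a₀ (t * b₀) (t * c₀), ∀ w ∈ truncCone a₂ (t * b₂) (t * c₂),
        z - (N : ℂ) * K i w ∈ truncCone a₁ (t * b₁) (t * c₁) := by
  have hc₂' : (0:ℝ) < c₂ := hb₂.trans hc₂
  set m : ℝ := min (c₁ - c₀) (min (b₀ - b₁) ((a₀ - a₁) * b₀ / (1 + a₁))) with hm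
  have hb₀' : (0:ℝ) < b₀ := hb₁.trans hb₀
  have hm0 : 0 < m := by
    refine lt_min (by linarith) (lt_min (by linarith) ?_)
    apply div_pos (by nlinarith) (by linarith)
  have hm1 : m ≤ c₁ - c₀ := min_le_left _ _
  have hm2 : m ≤ b₀ - b₁ := le_trans (min_le_right _ _) (min_le_left _ _)
  have hm3 : (1 + a₁) * m ≤ (a₀ - a₁) * b₀ := by
    have h : m ≤ (a₀ - a₁) * b₀ / (1 + a₁) := by
      calc m ≤ min (b₀ - b₁) ((a₀ - a₁) * b₀ / (1 + a₁)) := min_le_right _ _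
        _ ≤ (a₀ - a₁) * b₀ / (1 + a₁) := min_le_right _ _
    rw [le_div_iff₀ (by linarith : (0:ℝ) < 1 + a₁)] at h
    linarith
  clear_value m
  obtain ⟨T', hT'⟩ := Metric.tendsto_atTop.mp hε (m / c₂) (div_pos hm0 hc₂')
  refine ⟨max T' 1, fun t ht i z hz w hw => ?_⟩
  have ht1 : (1:ℝ) ≤ t := le_trans (le_max_right _ _) ht
  have ht0 : (0:ℝ) < t := by linarith
  have hεt : ε t ≤ m / c₂ := by
    have := hT' t (le_trans (le_max_left _ _) ht)
    rw [Real.dist_eq, sub_zero] at this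
    exact le_of_lt (lt_of_le_of_lt (le_abs_self _) this)
  obtain ⟨hz1, hz2⟩ := hz
  obtain ⟨hw1, hw2⟩ := hw
  have hz1a : a₀ * ‖z‖ ≤ z.im := le_trans (le_max_left _ _) hz1
  have hz1b : t * b₀ ≤ z.im := le_trans (le_max_right _ _) hz1
  set d : ℂ := (N : ℂ) * K i w with hd
  clear_value d
  have hD : ‖d‖ ≤ t * m := by
    have h1 : ‖d‖ = N * ‖K i w‖ := by
      rw [hd, norm_mul, Complex.norm_real, Real.norm_eq_abs, abs_of_pos hN]
    have h2 := hK t i w ⟨hw1, hw2⟩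
    have h3 : ε t * ‖w‖ ≤ (m / c₂) * (t * c₂) := by
      apply mul_le_mul hεt hw2 (norm_nonneg _)
      exact le_of_lt (div_pos hm0 hc₂')
    have h4 : (m / c₂) * (t * c₂) = t * m := by field_simp
    rw [h1]
    linarith [h2, h3]
  have habs : ‖z - d‖ ≤ ‖z‖ + ‖d‖ := by
    exact norm_sub_le z d
  have him : (z - d).im = z.im - d.im := Complex.sub_im z d
  have hdim : d.im ≤ ‖d‖ := le_trans (le_abs_self _) (Complex.abs_im_le_norm d)
  have hzim : z.im ≤ ‖z‖ := Complex.im_le_norm z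
  have hA : t * b₀ ≤ ‖z‖ := le_trans hz1b hzim
  refine ⟨max_le ?_ ?_, ?_⟩
  · rw [him]
    have h5 : a₁ * ‖z - d‖ ≤ a₁ * (‖z‖ + t * m) := by
      apply mul_le_mul_of_nonneg_left _ (le_of_lt ha₁')
      linarith
    nlinarith [mul_le_mul_of_nonneg_left hm3 (le_of_lt ht0),
      mul_le_mul_of_nonneg_left hA (by linarith : (0:ℝ) ≤ a₀ - a₁)]
  · rw [him]
    nlinarith [mul_le_mul_of_nonneg_left hm2 ht0.le]
  · have h6 : t * m ≤ t * (c₁ - c₀) := mul_le_mul_of_nonneg_left hm1 ht0.le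
    have h7 : t * (c₁ - c₀) = t * c₁ - t * c₀ := by ring
    linarith
end

section
/- Let 𝒯 ∈ Tree(k), 𝒯_j ∈ Tree(n_j) for j ∈ [k], N = n₁+…+n_k, ι_j : [n_j] → [N] the shifted inclusions, and fix j ∈ [k], i ∈ [n_j]. Then the branch of the operad composition satisfies br_{ι_j(i)}(𝒯(𝒯₁,…,𝒯_k)) = { s̃ · (ι_j)_*(s') : s̃ ∈ br_j(𝒯)(𝒯₁,…,𝒯_k), s' ∈ br_i(𝒯_j) }, and moreover the decomposition of each element into such a pair (s̃, s') is unique. -/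
/-- A rooted subtree of the tree of alternating strings on the alphabet `Fin N`. -/
def IsTree {N : ℕ} (T : Set (List (Fin N))) : Prop :=
  [] ∈ T ∧ (∀ s ∈ T, s.Chain' (· ≠ ·)) ∧
    ∀ (j : Fin N) (s : List (Fin N)), j :: s ∈ T → s ∈ T

/-- The branch `br_j(𝒯) = {s : sj ∈ 𝒯}` of a rooted tree. -/
def brS {M : ℕ} (j : Fin M) (T : Set (List (Fin M))) : Set (List (Fin M)) :=
  {s | s ++ [j] ∈ T}

/-- The shifted inclusion `ι_j : [n_j] → [n₁ + ⋯ + n_k]`. -/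
def iotaS {K : ℕ} (n : Fin K → ℕ) (j : Fin K) (i : Fin (n j)) : Fin (∑ j', n j') :=
  ⟨(∑ j' ∈ Finset.univ.filter (fun j' => j' < j), n j') + i.val, by
    have hi := i.isLt
    have hj : j ∉ Finset.univ.filter (fun j' => j' < j) := by simp
    have h2 : n j + ∑ j' ∈ Finset.univ.filter (fun j' => j' < j), n j'
        = ∑ j' ∈ insert j (Finset.univ.filter (fun j' => j' < j)), n j' :=
      (Finset.sum_insert hj).symm
    have h3 : ∑ j' ∈ insert j (Finset.univ.filter (fun j' => j' < j)), n j' ≤ ∑ j', n j' :=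
      Finset.sum_le_sum_of_subset (Finset.subset_univ _)
    omega⟩

/-- The operad composition `𝒯(𝒯₁,…,𝒯_k)`: all strings
`(ι_{i₁})_*(s₁) ⋯ (ι_{i_ℓ})_*(s_ℓ)` with `i₁…i_ℓ ∈ 𝒯` and `s_t ∈ 𝒯_{i_t}` nonempty. -/
def compS {K : ℕ} (n : Fin K → ℕ) (𝒯 : Set (List (Fin K)))
    (Ts : (j : Fin K) → Set (List (Fin (n j)))) : Set (List (Fin (∑ j', n j'))) :=
  {w | ∃ p : List ((j : Fin K) × List (Fin (n j))),
    p.map Sigma.fst ∈ 𝒯 ∧ (∀ q ∈ p, q.2 ∈ Ts q.1 ∧ q.2 ≠ []) ∧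
    w = (p.map (fun q => q.2.map (iotaS n q.1))).flatten}

lemma offsetLe {K : ℕ} (n : Fin K → ℕ) {j j' : Fin K} (h : j < j') :
    (∑ x ∈ Finset.univ.filter (fun x => x < j), n x) + n j ≤
      ∑ x ∈ Finset.univ.filter (fun x => x < j'), n x := by
  have hsub : insert j (Finset.univ.filter (fun x => x < j)) ⊆
      Finset.univ.filter (fun x => x < j') := by
    intro x hx
    simp only [Finset.mem_insert, Finset.mem_filter, Finset.mem_univ, true_and] at hx ⊢
    rcases hx with rfl | hx
    · exact h
    · exact hx.trans h
  have h2 := Finset.sum_le_sum_of_subset (f := n) hsub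
  rw [Finset.sum_insert (by simp)] at h2
  omega

lemma iota_fst {K : ℕ} (n : Fin K → ℕ) {j j' : Fin K} {i : Fin (n j)} {i' : Fin (n j')}
    (h : iotaS n j i = iotaS n j' i') : j = j' := by
  by_contra hne
  have hi := i.isLt; have hi' := i'.isLt
  have hv : (iotaS n j i).val = (iotaS n j' i').val := congrArg Fin.val h
  simp only [iotaS] at hv
  rcases lt_or_gt_of_ne hne with hlt | hlt
  · have := offsetLe n hlt; omega
  · have := offsetLe n hlt; omega

lemma iota_snd {K : ℕ} (n : Fin K → ℕ) {j : Fin K} {i i' : Fin (n j)}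
    (h : iotaS n j i = iotaS n j i') : i = i' := by
  have hv : (iotaS n j i).val = (iotaS n j i').val := congrArg Fin.val h
  simp only [iotaS] at hv
  exact Fin.ext (by omega)

lemma prefix_nil {α : Type*} (P : α → Prop) {a t b : List α} (h : a = t ++ b)
    (ha : ∀ x ∈ a, P x) (ht : ∀ v ∈ t.getLast?, ¬ P v) : t = [] := by
  cases t with
  | nil => rfl
  | cons y t' =>
    exfalso
    have hm : (y :: t').getLast (by simp) ∈ (y :: t') := List.getLast_mem _
    exact ht ((y :: t').getLast (by simp))
      (by rw [List.getLast?_eq_getLast (by simp)]; rfl)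
      (ha _ (by rw [h]; exact List.mem_append_left _ hm))

lemma split_unique {α : Type*} (P : α → Prop) :
    ∀ (t₁ t₂ a b : List α), t₁ ++ a = t₂ ++ b →
      (∀ x ∈ a, P x) → (∀ x ∈ b, P x) →
      (∀ v ∈ t₁.getLast?, ¬ P v) → (∀ v ∈ t₂.getLast?, ¬ P v) →
      t₁ = t₂ ∧ a = b := by
  intro t₁
  induction t₁ with
  | nil =>
    intro t₂ a b h ha hb h1 h2
    simp only [List.nil_append] at h
    have ht2 := prefix_nil P h ha h2
    subst ht2
    simpa using h
  | cons x t₁' ih =>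
    intro t₂ a b h ha hb h1 h2
    cases t₂ with
    | nil =>
      exfalso
      simp only [List.nil_append] at h
      have := prefix_nil P h.symm hb h1
      simp at this
    | cons y t₂' =>
      simp only [List.cons_append, List.cons.injEq] at h
      obtain ⟨rfl, h⟩ := h
      have key := ih t₂' a b h ha hb ?_ ?_
      · exact ⟨by rw [key.1], key.2⟩
      · intro v hv
        apply h1
        cases t₁' with
        | nil => simp at hv
        | cons z l => rw [List.getLast?_cons_cons]; exact hv
      · intro v hv
        apply h2
        cases t₂' with
        | nil => simp at hv
        | cons z l => rw [List.getLast?_cons_cons]; exact hv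

theorem stmt19 {K : ℕ} (n : Fin K → ℕ) (𝒯 : Set (List (Fin K)))
    (Ts : (j : Fin K) → Set (List (Fin (n j))))
    (h𝒯 : IsTree 𝒯) (hTs : ∀ j, IsTree (Ts j))
    (j : Fin K) (i : Fin (n j)) :
    brS (iotaS n j i) (compS n 𝒯 Ts) =
      {w | ∃ t ∈ compS n (brS j 𝒯) Ts, ∃ s' ∈ brS i (Ts j),
        w = t ++ s'.map (iotaS n j)} ∧
    ∀ t₁ ∈ compS n (brS j 𝒯) Ts, ∀ s₁ ∈ brS i (Ts j),
      ∀ t₂ ∈ compS n (brS j 𝒯) Ts, ∀ s₂ ∈ brS i (Ts j),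
        t₁ ++ s₁.map (iotaS n j) = t₂ ++ s₂.map (iotaS n j) → t₁ = t₂ ∧ s₁ = s₂ := by
  -- elements of `compS n (brS j 𝒯) Ts` are empty or end outside the range of `iotaS n j`
  have hlast : ∀ t ∈ compS n (brS j 𝒯) Ts,
      ∀ v ∈ t.getLast?, ¬ ∃ x : Fin (n j), v = iotaS n j x := by
    intro t ht v hv hP
    obtain ⟨x, hx⟩ := hP
    obtain ⟨p, hp1, hp2, rfl⟩ := ht
    rcases List.eq_nil_or_concat p with rfl | ⟨p', q, rfl⟩
    · simp at hv
    obtain ⟨m, s⟩ := q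
    rcases List.eq_nil_or_concat s with rfl | ⟨s'', a, rfl⟩
    · exact absurd rfl (hp2 ⟨m, []⟩ (by simp)).2
    simp only [List.concat_eq_append] at hp1 hp2 hv
    have hfl : (((p' ++ [(⟨m, s'' ++ [a]⟩ : (j : Fin K) × List (Fin (n j)))]).map
          (fun q : (j : Fin K) × List (Fin (n j)) => q.2.map (iotaS n q.1))).flatten)
        = ((p'.map (fun q : (j : Fin K) × List (Fin (n j)) => q.2.map (iotaS n q.1))).flatten
            ++ s''.map (iotaS n m)) ++ [iotaS n m a] := by
      simp
    rw [hfl, List.getLast?_concat] at hv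
    have hv' : iotaS n m a = v := by simpa using hv
    have hmem : (p'.map Sigma.fst ++ [m]) ++ [j] ∈ 𝒯 := by
      simpa [brS] using hp1
    have hchain := h𝒯.2.1 _ hmem
    rw [List.append_assoc] at hchain
    have hmj : m ≠ j := (List.isChain_append.mp hchain).2.1.rel_head
    have : iotaS n m a = iotaS n j x := by rw [hv', hx]
    exact hmj (iota_fst n this)
  constructor
  · ext w
    simp only [brS, Set.mem_setOf_eq]
    constructor
    · rintro ⟨p, hp1, hp2, heq⟩
      rcases List.eq_nil_or_concat p with rfl | ⟨p', q, rfl⟩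
      · simp at heq
      obtain ⟨m, s⟩ := q
      rcases List.eq_nil_or_concat s with rfl | ⟨s'', a, rfl⟩
      · exact absurd rfl (hp2 ⟨m, []⟩ (by simp)).2
      simp only [List.concat_eq_append] at hp1 hp2 heq
      have heq' : w ++ [iotaS n j i]
          = ((p'.map (fun q : (j : Fin K) × List (Fin (n j)) => q.2.map (iotaS n q.1))).flatten
              ++ s''.map (iotaS n m)) ++ [iotaS n m a] := by
        rw [heq]; simp
      obtain ⟨hw, hl⟩ := List.append_inj' heq' (by simp)
      have hia : iotaS n j i = iotaS n m a := by simpa using hl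
      have hjm : j = m := iota_fst n hia
      subst hjm
      obtain rfl : i = a := iota_snd n hia
      refine ⟨(p'.map (fun q : (j : Fin K) × List (Fin (n j)) => q.2.map (iotaS n q.1))).flatten,
        ⟨p', ?_, fun q hq => hp2 q (List.mem_append_left _ hq), rfl⟩, s'', ?_, hw⟩
      · simpa [brS] using hp1
      · exact (hp2 ⟨j, s'' ++ [i]⟩ (by simp)).1
    · rintro ⟨t, ⟨p, hp1, hp2, rfl⟩, s', hs', rfl⟩
      refine ⟨p ++ [⟨j, s' ++ [i]⟩], ?_, ?_, ?_⟩
      · simpa [brS] using hp1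
      · intro q hq
        rcases List.mem_append.mp hq with h | h
        · exact hp2 q h
        · simp only [List.mem_singleton] at h
          subst h
          exact ⟨hs', by simp⟩
      · simp [List.append_assoc]
  · intro t₁ ht₁ s₁ hs₁ t₂ ht₂ s₂ hs₂ heq
    have key := split_unique (fun v => ∃ x : Fin (n j), v = iotaS n j x)
      t₁ t₂ (s₁.map (iotaS n j)) (s₂.map (iotaS n j)) heq
      (by rintro x hx; obtain ⟨y, _, rfl⟩ := List.mem_map.mp hx; exact ⟨y, rfl⟩)
      (by rintro x hx; obtain ⟨y, _, rfl⟩ := List.mem_map.mp hx; exact ⟨y, rfl⟩)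
      (hlast t₁ ht₁) (hlast t₂ ht₂)
    refine ⟨key.1, ?_⟩
    have hinj : Function.Injective (iotaS n j) := fun a b h => iota_snd n h
    exact List.map_injective_iff.mpr hinj key.2
end
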